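/- Let α, m be positive integers and c_1,…,c_α positive integers. Let A_i ∈ ℝ^{c_i × m} and b_i ∈ ℝ^{c_i} for i = 1,…,α. Suppose (1) for each i, the affine system {x ∈ ℝ^m : A_i x = b_i} is nonempty, and (2) the image of the block matrix [A_1ᵀ, A_2ᵀ, …, A_αᵀ] decomposes as the internal direct sum Im A_1ᵀ ⊕ Im A_2ᵀ ⊕ … ⊕ Im A_αᵀ. Then the intersection ⋂_{i=1}^α {x ∈ ℝ^m : A_i x = b_i} is nonempty. -/

import Mathlib

open Matrix
/-- Corollary of Farkas' lemma, Boros.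
If each affine system `A i *ᵥ x = b i` is solvable and the row spaces
`Im (A i)ᵀ` form an internal direct sum (they are independent and span the row
space of the stacked matrix), then the systems are simultaneously solvable. -/
theorem stmt0 (α m : ℕ) (hα : 0 < α) (hm : 0 < m) (c : Fin α → ℕ) (hc : ∀ i, 0 < c i)
    (A : ∀ i, Matrix (Fin (c i)) (Fin m) ℝ) (b : ∀ i, Fin (c i) → ℝ)
    (h1 : ∀ i, ∃ x : Fin m → ℝ, (A i) *ᵥ x = b i)
    (h2span : Submodule.span ℝ (Set.range (fun p : (Σ i, Fin (c i)) => A p.1 p.2)) =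
      ⨆ i, Submodule.span ℝ (Set.range (fun j => A i j)))
    (h2ind : iSupIndep (fun i => Submodule.span ℝ (Set.range (fun j => A i j)))) :
    ∃ x : Fin m → ℝ, ∀ i, (A i) *ᵥ x = b i := by
  classical
  choose y hy using h1
  set V : Fin α → Submodule ℝ (Fin m → ℝ) :=
    fun i => Submodule.span ℝ (Set.range (fun j => A i j)) with hV
  -- functional on each V i given by dotting with y i
  set dotLin : ∀ i : Fin α, (V i) →ₗ[ℝ] ℝ := fun i =>
    { toFun := fun v => (v : Fin m → ℝ) ⬝ᵥ y i
      map_add' := by intro u v; simp [add_dotProduct]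
      map_smul' := by intro r v; simp [smul_dotProduct] } with hdl
  set φ : (Π₀ i, V i) →ₗ[ℝ] (Fin m → ℝ) :=
    DFinsupp.lsum ℕ (fun i => (V i).subtype) with hφ
  have hφinj : Function.Injective φ := h2ind.dfinsupp_lsum_injective
  obtain ⟨ψ, hψ⟩ := LinearMap.exists_leftInverse_of_injective (K := ℝ) (V := Π₀ i, V i)
    (V' := Fin m → ℝ) φ (LinearMap.ker_eq_bot_of_injective hφinj)
  set g : (Π₀ i, V i) →ₗ[ℝ] ℝ := DFinsupp.lsum ℕ dotLin with hg
  set f : (Fin m → ℝ) →ₗ[ℝ] ℝ := g ∘ₗ ψ with hf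
  refine ⟨fun k => f (Pi.single k 1), fun i => ?_⟩
  funext j
  have hmem : A i j ∈ V i := Submodule.subset_span ⟨j, rfl⟩
  have hrow : A i j = φ (DFinsupp.single i ⟨A i j, hmem⟩) := by
    simp [hφ]
  have hf_row : f (A i j) = A i j ⬝ᵥ y i := by
    conv_lhs => rw [hrow]
    rw [hf, LinearMap.comp_apply]
    have hψφ : ψ (φ (DFinsupp.single i ⟨A i j, hmem⟩)) = DFinsupp.single i ⟨A i j, hmem⟩ := by
      have := LinearMap.congr_fun hψ (DFinsupp.single i ⟨A i j, hmem⟩)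
      simpa using this
    rw [hψφ, hg, DFinsupp.lsum_single, hdl]
    rfl
  have hdecomp : (∑ k, A i j k • (Pi.single k 1 : Fin m → ℝ)) = A i j := by
    funext l
    simp [Finset.sum_apply, Pi.single_apply, mul_ite]
  have hdot : (A i *ᵥ fun k => f (Pi.single k 1)) j = f (A i j) := by
    calc (A i *ᵥ fun k => f (Pi.single k 1)) j
        = ∑ k, A i j k * f (Pi.single k 1) := rfl
      _ = ∑ k, f (A i j k • (Pi.single k 1 : Fin m → ℝ)) := by simp [smul_eq_mul]
      _ = f (∑ k, A i j k • (Pi.single k 1 : Fin m → ℝ)) := (map_sum f _ _).symm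
      _ = f (A i j) := by rw [hdecomp]
  rw [hdot, hf_row]
  rw [← hy i]
  simp [mulVec, dotProduct]
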